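/- Fix an integer n ≥ 1. Let ψ : ℝ → ℝ be (n−1)-times continuously differentiable such that for every θ ∈ ℤ the restriction of ψ to [θ/2, (θ+1)/2] coincides with a polynomial of degree at most n, with leading coefficient A_θ; assume A_0 ≠ 0. Let η : ℝ → ℝ be integrable, vanishing outside (−2^{−5}, 2^{−5}), with ∫_ℝ y^M η(y) dy = 0 for 0 ≤ M ≤ n+2 and ∫_0^{1/2} u^n η(u) du > 0. Assume that either (y ↦ y^n η(y) is odd and A_{−1} · A_0 ≤ 0) or (y ↦ y^n η(y) is even and A_{−1} · A_0 ≥ 0). Then for every real number a ≥ 1: |∫_ℝ η(a y) ψ(y) dy| ≥ |A_0| · a^{−(n+1)} · ∫_0^{1/2} u^n η(u) du. -/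

import Mathlib

open MeasureTheory Set Finset Real

private lemma aux_coeff : ∀ (k : ℕ) (Q : Polynomial ℝ) (f : ℝ → ℝ),
    ContDiff ℝ k f →
    (∀ x ∈ Set.Icc (-(1:ℝ)/2) 0, f x = Q.eval x) →
    (∀ x ∈ Set.Icc (0:ℝ) (1/2), f x = 0) →
    ∀ j ≤ k, Q.coeff j = 0 := by
  intro k
  induction k with
  | zero =>
    intro Q f hf hL hR j hj
    have hj0 : j = 0 := Nat.le_zero.mp hj
    subst hj0
    rw [Polynomial.coeff_zero_eq_eval_zero, ← hL 0 (by norm_num), hR 0 (by norm_num)]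
  | succ k ih =>
    intro Q f hf hL hR j hj
    have hf' : ContDiff ℝ ((k : WithTop ℕ∞) + 1) f := by exact_mod_cast hf
    have hdf : ContDiff ℝ (k : WithTop ℕ∞) (deriv f) := (contDiff_succ_iff_deriv.mp hf').2.2
    match j, hj with
    | 0, _ =>
      rw [Polynomial.coeff_zero_eq_eval_zero, ← hL 0 (by norm_num), hR 0 (by norm_num)]
    | (i+1), hj =>
      have hcont : Continuous (deriv f) := hdf.continuous
      have hL' : ∀ x ∈ Set.Icc (-(1:ℝ)/2) 0, deriv f x = Q.derivative.eval x := by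
        have hoo : Set.EqOn (deriv f) (fun x => Q.derivative.eval x) (Ioo (-(1:ℝ)/2) 0) := by
          intro x hx
          have hmem : Ioo (-(1:ℝ)/2) 0 ∈ nhds x := isOpen_Ioo.mem_nhds hx
          have heq : deriv f x = deriv (fun y => Q.eval y) x := by
            apply Filter.EventuallyEq.deriv_eq
            filter_upwards [hmem] with y hy using hL y (Ioo_subset_Icc_self hy)
          rw [heq, Polynomial.deriv]
        intro x hx
        have hcl : Set.Icc (-(1:ℝ)/2) 0 = closure (Ioo (-(1:ℝ)/2) 0) :=
          (closure_Ioo (by norm_num)).symm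
        exact hoo.closure hcont Q.derivative.continuous (hcl ▸ hx)
      have hR' : ∀ x ∈ Set.Icc (0:ℝ) (1/2), deriv f x = 0 := by
        have hoo : Set.EqOn (deriv f) (fun _ => (0:ℝ)) (Ioo (0:ℝ) (1/2)) := by
          intro x hx
          have hmem : Ioo (0:ℝ) (1/2) ∈ nhds x := isOpen_Ioo.mem_nhds hx
          have heq : deriv f x = deriv (fun _ : ℝ => (0:ℝ)) x := by
            apply Filter.EventuallyEq.deriv_eq
            filter_upwards [hmem] with y hy using hR y (Ioo_subset_Icc_self hy)
          rw [heq, deriv_const]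
        intro x hx
        have hcl : Set.Icc (0:ℝ) (1/2) = closure (Ioo (0:ℝ) (1/2)) :=
          (closure_Ioo (by norm_num)).symm
        exact hoo.closure hcont continuous_const (hcl ▸ hx)
      have h := ih Q.derivative (deriv f) hdf hL' hR' i (Nat.succ_le_succ_iff.mp hj)
      rw [Polynomial.coeff_derivative] at h
      have : ((i:ℝ) + 1) ≠ 0 := by positivity
      exact (mul_eq_zero.mp h).resolve_right this

theorem stmt_14
    (n : ℕ) (hn : 1 ≤ n) (ψ : ℝ → ℝ)
    (hsmooth : ContDiff ℝ (n - 1 : ℕ) ψ)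
    (A : ℤ → ℝ)
    (hpoly : ∀ θ : ℤ, ∃ c : ℕ → ℝ, c n = A θ ∧
      ∀ x ∈ Set.Icc ((θ : ℝ) / 2) (((θ : ℝ) + 1) / 2),
        ψ x = ∑ j ∈ Finset.range (n + 1), c j * x ^ j)
    (hA0 : A 0 ≠ 0)
    (η : ℝ → ℝ) (hη : MeasureTheory.Integrable η)
    (hηsupp : ∀ y : ℝ, y ∉ Set.Ioo (-(2 : ℝ) ^ (-5 : ℤ)) ((2 : ℝ) ^ (-5 : ℤ)) → η y = 0)
    (hηmom : ∀ M : ℕ, M ≤ n + 2 → ∫ y : ℝ, y ^ M * η y = 0)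
    (hηbig : 0 < ∫ u in (0 : ℝ)..(1 / 2), u ^ n * η u)
    (hparity :
      ((∀ y : ℝ, (-y) ^ n * η (-y) = -(y ^ n * η y)) ∧ A (-1) * A 0 ≤ 0) ∨
      ((∀ y : ℝ, (-y) ^ n * η (-y) = y ^ n * η y) ∧ 0 ≤ A (-1) * A 0)) :
    ∀ a : ℝ, 1 ≤ a →
      |A 0| * a ^ (-((n : ℤ) + 1)) * (∫ u in (0 : ℝ)..(1 / 2), u ^ n * η u) ≤
        |∫ y : ℝ, η (a * y) * ψ y| := by
  intro a ha
  have ha0 : (0:ℝ) < a := lt_of_lt_of_le one_pos ha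
  have hpow : ((2:ℝ) ^ (-5 : ℤ)) = 1/32 := by norm_num
  -- basic integrability
  have hint : ∀ j : ℕ, Integrable (fun u => u ^ j * η u) := by
    intro j
    have heq : (fun u => u ^ j * η u)
        = fun u => (Set.Icc (-(1:ℝ)) 1).indicator (fun u => u ^ j) u * η u := by
      funext u
      by_cases hu : u ∈ Set.Ioo (-(2 : ℝ) ^ (-5 : ℤ)) ((2 : ℝ) ^ (-5 : ℤ))
      · have hu' : u ∈ Set.Icc (-(1:ℝ)) 1 := by
          simp only [Set.mem_Ioo, hpow] at hu
          constructor <;> linarith [hu.1, hu.2]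
        rw [Set.indicator_of_mem hu']
      · rw [hηsupp u hu]; ring
    rw [heq]
    refine Integrable.bdd_mul (c := 1) hη ?_ (Filter.Eventually.of_forall ?_)
    · exact ((measurable_id.pow_const j).indicator measurableSet_Icc).aestronglyMeasurable
    · intro x
      by_cases hx : x ∈ Set.Icc (-(1:ℝ)) 1
      · rw [Set.indicator_of_mem hx]
        have h1 : |x| ≤ 1 := abs_le.mpr ⟨hx.1, hx.2⟩
        calc ‖x ^ j‖ = |x| ^ j := by rw [Real.norm_eq_abs, abs_pow]
          _ ≤ 1 ^ j := pow_le_pow_left₀ (abs_nonneg x) h1 j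
          _ = 1 := one_pow j
      · rw [Set.indicator_of_notMem hx]; simp
  -- polynomial pieces
  obtain ⟨c0, hc0n, hc0⟩ := hpoly 0
  obtain ⟨c1, hc1n, hc1⟩ := hpoly (-1)
  have hc0' : ∀ x ∈ Set.Icc (0:ℝ) (1/2), ψ x = ∑ j ∈ Finset.range (n+1), c0 j * x ^ j := by
    intro x hx
    exact hc0 x (Set.mem_Icc.mpr ⟨by push_cast; linarith [hx.1], by push_cast; linarith [hx.2]⟩)
  have hc1' : ∀ x ∈ Set.Icc (-(1:ℝ)/2) 0, ψ x = ∑ j ∈ Finset.range (n+1), c1 j * x ^ j := by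
    intro x hx
    exact hc1 x (Set.mem_Icc.mpr ⟨by push_cast; linarith [hx.1], by push_cast; linarith [hx.2]⟩)
  -- coefficient matching
  set P : ℝ → ℝ := fun x => ∑ j ∈ Finset.range (n+1), c0 j * x ^ j with hP
  have hPsm : ContDiff ℝ ((n-1 : ℕ) : WithTop ℕ∞) P :=
    ContDiff.sum fun j _ => contDiff_const.mul (contDiff_id.pow j)
  set Q : Polynomial ℝ := ∑ j ∈ Finset.range (n+1), Polynomial.C (c1 j - c0 j) * Polynomial.X ^ j
    with hQ
  have hQeval : ∀ x : ℝ, Q.eval x = ∑ j ∈ Finset.range (n+1), (c1 j - c0 j) * x ^ j := by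
    intro x
    rw [hQ, Polynomial.eval_finset_sum]
    exact Finset.sum_congr rfl fun j _ => by simp
  have hQcoeff : ∀ j, j ≤ n → Q.coeff j = c1 j - c0 j := by
    intro j hj
    rw [hQ, Polynomial.finset_sum_coeff]
    simp only [Polynomial.coeff_C_mul, Polynomial.coeff_X_pow]
    rw [Finset.sum_eq_single j (fun i _ hne => by simp [Ne.symm hne])
      (fun h => absurd (Finset.mem_range.mpr (by omega)) h)]
    simp
  have key : ∀ j, j ≤ n - 1 → Q.coeff j = 0 := by
    refine aux_coeff (n-1) Q (fun x => ψ x - P x) (hsmooth.sub hPsm) ?_ ?_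
    · intro x hx
      show ψ x - P x = Q.eval x
      rw [hc1' x hx, hQeval, hP, ← Finset.sum_sub_distrib]
      exact Finset.sum_congr rfl fun j _ => by ring
    · intro x hx
      show ψ x - P x = 0
      rw [hc0' x hx, hP, sub_self]
  have keyj : ∀ j, j < n → c1 j = c0 j := by
    intro j hj
    have h := key j (by omega)
    rw [hQcoeff j hj.le] at h
    linarith
  set d : ℝ := A (-1) - A 0 with hd
  have hψneg : ∀ x ∈ Set.Icc (-(1:ℝ)/2) 0, ψ x = P x + d * x ^ n := by
    intro x hx
    have hsum : ∑ j ∈ Finset.range n, c1 j * x ^ j = ∑ j ∈ Finset.range n, c0 j * x ^ j :=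
      Finset.sum_congr rfl fun j hj => by rw [keyj j (Finset.mem_range.mp hj)]
    rw [hc1' x hx, Finset.sum_range_succ, hsum, hc1n]
    simp only [hP]
    rw [Finset.sum_range_succ, hc0n, hd]
    ring
  -- the half-line moment
  set m : ℝ := ∫ u in Set.Ioc (0:ℝ) (1/2), u ^ n * η u with hm
  have hmbig : 0 < m := by
    rwa [intervalIntegral.integral_of_le (by norm_num : (0:ℝ) ≤ 1/2)] at hηbig
  have hIoi : (∫ u in Set.Ioi (0:ℝ), u ^ n * η u) = m := by
    rw [← Set.Ioc_union_Ioi_eq_Ioi (by norm_num : (0:ℝ) ≤ 1/2),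
      setIntegral_union (Set.Ioc_disjoint_Ioi le_rfl) measurableSet_Ioi
        ((hint n).integrableOn) ((hint n).integrableOn)]
    have h2 : (∫ u in Set.Ioi (1/2:ℝ), u ^ n * η u) = 0 := by
      refine setIntegral_eq_zero_of_forall_eq_zero fun u hu => ?_
      rw [hηsupp u ?_]
      · ring
      simp only [Set.mem_Ioo, not_and_or, not_lt]
      right
      have h3 : (1/2:ℝ) < u := hu
      rw [hpow]; linarith
    rw [h2, add_zero, hm]
  have hMIio : (∫ u in Set.Iio (0:ℝ), u ^ n * η u) = -m := by
    have hsplit := intervalIntegral.integral_Iio_add_Ici (b := (0:ℝ))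
      (f := fun u => u ^ n * η u) (μ := volume)
      ((hint n).integrableOn) ((hint n).integrableOn)
    rw [MeasureTheory.integral_Ici_eq_integral_Ioi, hIoi, hηmom n (by omega)] at hsplit
    linarith
  -- even case is contradictory
  have habs : |A 0| ≤ |d| := by
    rcases hparity with ⟨_, hc⟩ | ⟨heven, _⟩
    · rw [hd]
      nlinarith [sq_abs (A (-1) - A 0), sq_abs (A 0), abs_nonneg (A (-1) - A 0),
        abs_nonneg (A 0), sq_nonneg (A (-1))]
    · exfalso
      have h1 := integral_comp_neg_Ioi (0:ℝ) (fun u => u ^ n * η u)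
      simp only [neg_zero, MeasureTheory.integral_Iic_eq_integral_Iio] at h1
      have h2 : ∫ x in Set.Ioi (0:ℝ), (-x) ^ n * η (-x) = ∫ x in Set.Ioi (0:ℝ), x ^ n * η x :=
        setIntegral_congr_fun measurableSet_Ioi fun x _ => heven x
      have hIio : (∫ u in Set.Iio (0:ℝ), u ^ n * η u) = m := by
        rw [← h1, h2, hIoi]
      rw [hMIio] at hIio
      linarith
  -- indicator integrand
  set w : ℝ → ℝ := (Set.Iio (0:ℝ)).indicator (fun u => u ^ n * η u) with hw
  have hintw : Integrable w := (hint n).indicator measurableSet_Iio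
  have hwint : ∫ u, w u = -m := by
    rw [hw, integral_indicator measurableSet_Iio, hMIio]
  -- pointwise rewriting of the integrand
  set g : ℝ → ℝ := fun y => P y + d * (Set.Iio (0:ℝ)).indicator (fun y => y ^ n) y with hg
  have hpw : ∀ y, η (a * y) * ψ y = η (a * y) * g y := by
    intro y
    by_cases hmem : a * y ∈ Set.Ioo (-(2 : ℝ) ^ (-5 : ℤ)) ((2 : ℝ) ^ (-5 : ℤ))
    · have hay : |a * y| < 1/32 := by
        rw [abs_lt]
        simp only [Set.mem_Ioo, hpow] at hmem
        constructor <;> linarith [hmem.1, hmem.2]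
      have hyb : |y| < 1/32 := by
        rw [abs_mul, abs_of_pos ha0] at hay
        nlinarith [abs_nonneg y]
      have hy1 : -(1:ℝ)/2 ≤ y := by rw [abs_lt] at hyb; linarith [hyb.1]
      have hy2 : y ≤ 1/2 := by rw [abs_lt] at hyb; linarith [hyb.2]
      rcases le_or_gt 0 y with h | h
      · rw [hc0' y ⟨h, hy2⟩]
        simp only [hg, Set.indicator_apply, Set.mem_Iio, hP]
        rw [if_neg (not_lt.mpr h)]
        ring
      · rw [hψneg y ⟨hy1, h.le⟩]
        simp only [hg, Set.indicator_apply, Set.mem_Iio, hP]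
        rw [if_pos h]
    · rw [hηsupp _ hmem]; ring
  -- change of variables
  have hcomp : (fun y => η (a * y) * g y) = fun y => (fun u => η u * g (u / a)) (a * y) := by
    funext y
    simp only []
    rw [mul_div_cancel_left₀ y (ne_of_gt ha0)]
  have hterm : ∀ u : ℝ, η u * (∑ j ∈ Finset.range (n+1), c0 j * (u/a) ^ j)
      = ∑ j ∈ Finset.range (n+1), (c0 j * (a⁻¹) ^ j) * (u ^ j * η u) := by
    intro u
    rw [Finset.mul_sum]
    refine Finset.sum_congr rfl fun j _ => ?_
    rw [div_pow, div_eq_mul_inv]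
    ring
  have hgdecomp : (fun u => η u * g (u / a))
      = fun u => (∑ j ∈ Finset.range (n+1), (c0 j * (a⁻¹) ^ j) * (u ^ j * η u))
        + (d * (a⁻¹) ^ n) * w u := by
    funext u
    have hiff : u / a < 0 ↔ u < 0 := by
      rw [div_lt_iff₀ ha0, zero_mul]
    simp only [hg, hw, hP, Set.indicator_apply, Set.mem_Iio]
    by_cases hu : u < 0
    · rw [if_pos (hiff.mpr hu), if_pos hu, mul_add, hterm u]
      rw [div_pow, div_eq_mul_inv]
      ring
    · rw [if_neg (fun hlt => hu (hiff.mp hlt)), if_neg hu, mul_add, hterm u]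
      ring
  have hGint : ∫ u, η u * g (u / a) = -(d * (a⁻¹) ^ n * m) := by
    rw [hgdecomp]
    rw [integral_add (integrable_finset_sum _ fun j _ => (hint j).const_mul _)
      (hintw.const_mul _)]
    rw [integral_finset_sum _ fun j _ => (hint j).const_mul _]
    have hzero : ∀ j ∈ Finset.range (n+1),
        (∫ u, (c0 j * (a⁻¹) ^ j) * (u ^ j * η u)) = 0 := by
      intro j hj
      rw [MeasureTheory.integral_const_mul, hηmom j (by have := Finset.mem_range.mp hj; omega : j ≤ n + 2), mul_zero]
    rw [Finset.sum_congr rfl hzero, Finset.sum_const_zero, zero_add,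
      MeasureTheory.integral_const_mul, hwint]
    ring
  have hI : (∫ y, η (a * y) * ψ y) = -(a⁻¹ * (d * (a⁻¹) ^ n * m)) := by
    rw [show (fun y => η (a * y) * ψ y) = fun y => η (a * y) * g y from funext hpw,
      hcomp, MeasureTheory.Measure.integral_comp_mul_left (fun u => η u * g (u / a)) a,
      hGint, smul_eq_mul, abs_of_pos (inv_pos.mpr ha0)]
    ring
  -- final computation
  have hzpow : a ^ (-((n : ℤ) + 1)) = (a⁻¹) ^ (n + 1) := by
    rw [show -((n : ℤ) + 1) = -((n+1 : ℕ) : ℤ) by push_cast; ring,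
      zpow_neg, zpow_natCast, inv_pow]
  rw [hI, hzpow, intervalIntegral.integral_of_le (by norm_num : (0:ℝ) ≤ 1/2), ← hm]
  rw [abs_neg, abs_mul, abs_mul, abs_mul, abs_of_pos (inv_pos.mpr ha0),
    abs_pow, abs_of_pos (inv_pos.mpr ha0), abs_of_pos hmbig]
  have hapos : (0:ℝ) < a⁻¹ := inv_pos.mpr ha0
  calc |A 0| * a⁻¹ ^ (n+1) * m = a⁻¹ * (|A 0| * a⁻¹ ^ n * m) := by ring
    _ ≤ a⁻¹ * (|d| * a⁻¹ ^ n * m) := by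
        apply mul_le_mul_of_nonneg_left _ hapos.le
        apply mul_le_mul_of_nonneg_right _ hmbig.le
        exact mul_le_mul_of_nonneg_right habs (by positivity)
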